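/- For a proper graded ideal P of a G-graded ring R, the set S = h(R) \ P is a graded weakly system if and only if P is a graded weakly prime ideal of R. -/

import Mathlib

/-- The additive subgroup generated by all products `a * b` with `a ∈ S`, `b ∈ T`.
For two-sided ideals `I`, `J`, `mulClosure I J` is the ideal product `IJ`. -/
def mulClosure {R : Type*} [NonUnitalRing R] (S T : Set R) : AddSubgroup R :=
  AddSubgroup.closure {x | ∃ a ∈ S, ∃ b ∈ T, a * b = x}

/-- A two-sided ideal of a `G`-graded ring is graded if every homogeneous component of
every element of the ideal lies in the ideal. -/
def IsGradedIdeal {G R : Type*} [DecidableEq G] [NonUnitalRing R]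
    (𝒜 : G → AddSubgroup R) [DirectSum.Decomposition 𝒜] (P : TwoSidedIdeal R) : Prop :=
  ∀ x ∈ P, ∀ g : G, (DirectSum.decompose 𝒜 x g : R) ∈ P

/-- A proper graded ideal `P` is graded weakly prime if `0 ≠ IJ ⊆ P` implies `I ⊆ P` or
`J ⊆ P` for all graded ideals `I`, `J`. -/
def IsGradedWeaklyPrime {G R : Type*} [DecidableEq G] [NonUnitalRing R]
    (𝒜 : G → AddSubgroup R) [DirectSum.Decomposition 𝒜] (P : TwoSidedIdeal R) : Prop :=
  P ≠ ⊤ ∧ IsGradedIdeal 𝒜 P ∧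
    ∀ I J : TwoSidedIdeal R, IsGradedIdeal 𝒜 I → IsGradedIdeal 𝒜 J →
      mulClosure (I : Set R) (J : Set R) ≠ ⊥ →
      (mulClosure (I : Set R) (J : Set R) : Set R) ⊆ (P : Set R) → I ≤ P ∨ J ≤ P

/-- A set `S` of nonzero homogeneous elements is a graded weakly system if for all graded
ideals `I`, `J` with `I ∩ S ≠ ∅`, `J ∩ S ≠ ∅` and `IJ ≠ 0`, one has `IJ ∩ S ≠ ∅`. -/
def IsGradedWeaklySystem {G R : Type*} [DecidableEq G] [NonUnitalRing R]
    (𝒜 : G → AddSubgroup R) [DirectSum.Decomposition 𝒜] (S : Set R) : Prop :=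
  (∀ s ∈ S, SetLike.IsHomogeneousElem 𝒜 s) ∧ (0 : R) ∉ S ∧
    ∀ I J : TwoSidedIdeal R, IsGradedIdeal 𝒜 I → IsGradedIdeal 𝒜 J →
      ((I : Set R) ∩ S).Nonempty → ((J : Set R) ∩ S).Nonempty →
      mulClosure (I : Set R) (J : Set R) ≠ ⊥ →
      ((mulClosure (I : Set R) (J : Set R) : Set R) ∩ S).Nonempty

open DirectSum

/-- If every homogeneous component of `x` lies in a two-sided ideal `P`, then `x ∈ P`. -/
lemma mem_of_decompose_mem {G R : Type*} [DecidableEq G] [NonUnitalRing R]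
    (𝒜 : G → AddSubgroup R) [DirectSum.Decomposition 𝒜] (P : TwoSidedIdeal R)
    (x : R) (h : ∀ g : G, (DirectSum.decompose 𝒜 x g : R) ∈ P) : x ∈ P := by
  classical
  rw [← DirectSum.sum_support_decompose 𝒜 x]
  exact sum_mem fun g _ => h g

/-- The product of graded ideals is graded (as an additive subgroup). -/
lemma mulClosure_graded {G R : Type*} [Mul G] [DecidableEq G] [NonUnitalRing R]
    (𝒜 : G → AddSubgroup R) [DirectSum.Decomposition 𝒜]
    (hmul : ∀ ⦃g h : G⦄ ⦃x y : R⦄, x ∈ 𝒜 g → y ∈ 𝒜 h → x * y ∈ 𝒜 (g * h))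
    (I J : TwoSidedIdeal R) (hI : IsGradedIdeal 𝒜 I) (hJ : IsGradedIdeal 𝒜 J) :
    ∀ x ∈ mulClosure (I : Set R) (J : Set R), ∀ g : G,
      (DirectSum.decompose 𝒜 x g : R) ∈ mulClosure (I : Set R) (J : Set R) := by
  classical
  intro x hx
  induction hx using AddSubgroup.closure_induction with
  | mem x hx =>
    obtain ⟨a, ha, b, hb, rfl⟩ := hx
    intro g
    have habe : a * b = ∑ h ∈ (decompose 𝒜 a).support, ∑ k ∈ (decompose 𝒜 b).support,
        (decompose 𝒜 a h : R) * (decompose 𝒜 b k : R) := by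
      conv_lhs => rw [← DirectSum.sum_support_decompose 𝒜 a,
        ← DirectSum.sum_support_decompose 𝒜 b]
      rw [Finset.sum_mul_sum]
    rw [habe, DirectSum.decompose_sum, DFinsupp.finset_sum_apply,
      AddSubmonoidClass.coe_finset_sum]
    refine AddSubgroup.sum_mem _ fun h _ => ?_
    rw [DirectSum.decompose_sum, DFinsupp.finset_sum_apply, AddSubmonoidClass.coe_finset_sum]
    refine AddSubgroup.sum_mem _ fun k _ => ?_
    have hmem : (decompose 𝒜 a h : R) * (decompose 𝒜 b k : R) ∈ 𝒜 (h * k) :=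
      hmul (decompose 𝒜 a h).2 (decompose 𝒜 b k).2
    by_cases hg : h * k = g
    · rw [← hg, DirectSum.decompose_of_mem_same 𝒜 hmem]
      exact AddSubgroup.subset_closure ⟨_, hI a ha h, _, hJ b hb k, rfl⟩
    · rw [DirectSum.decompose_of_mem_ne 𝒜 hmem hg]
      exact AddSubgroup.zero_mem _
  | zero => intro g; simp
  | add x y _ _ hx hy =>
    intro g
    rw [DirectSum.decompose_add, DFinsupp.add_apply, AddSubgroup.coe_add]
    exact AddSubgroup.add_mem _ (hx g) (hy g)
  | neg x _ hx =>
    intro g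
    rw [DirectSum.decompose_neg, DFinsupp.neg_apply, AddSubgroup.coe_neg]
    exact AddSubgroup.neg_mem _ (hx g)

/-- If `x ∉ P` for a graded ideal setting, some homogeneous component of `x` is not in `P`. -/
lemma exists_decompose_not_mem {G R : Type*} [DecidableEq G] [NonUnitalRing R]
    (𝒜 : G → AddSubgroup R) [DirectSum.Decomposition 𝒜] (P : TwoSidedIdeal R)
    (x : R) (h : x ∉ P) : ∃ g : G, (DirectSum.decompose 𝒜 x g : R) ∉ P := by
  by_contra hc
  push_neg at hc
  exact h (mem_of_decompose_mem 𝒜 P x hc)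


/-- For a proper graded ideal -/
theorem stmt_9 {G R : Type*} [Group G] [DecidableEq G] [NonUnitalRing R]
    (𝒜 : G → AddSubgroup R) [DirectSum.Decomposition 𝒜]
    (hmul : ∀ ⦃g h : G⦄ ⦃x y : R⦄, x ∈ 𝒜 g → y ∈ 𝒜 h → x * y ∈ 𝒜 (g * h))
    (P : TwoSidedIdeal R) (hP : IsGradedIdeal 𝒜 P) (hproper : P ≠ ⊤) :
    IsGradedWeaklySystem 𝒜 ({x : R | SetLike.IsHomogeneousElem 𝒜 x} \ (P : Set R)) ↔
      IsGradedWeaklyPrime 𝒜 P := by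
  constructor
  · rintro ⟨-, -, hS⟩
    refine ⟨hproper, hP, fun I J hI hJ hne hsub => ?_⟩
    by_contra hc
    push_neg at hc
    obtain ⟨hIP, hJP⟩ := hc
    obtain ⟨x, hxI, hxP⟩ := SetLike.not_le_iff_exists.mp hIP
    obtain ⟨y, hyJ, hyP⟩ := SetLike.not_le_iff_exists.mp hJP
    obtain ⟨g, hg⟩ := exists_decompose_not_mem 𝒜 P x hxP
    obtain ⟨k, hk⟩ := exists_decompose_not_mem 𝒜 P y hyP
    obtain ⟨z, hz, hzhom, hzP⟩ := hS I J hI hJ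
      ⟨_, hI x hxI g, ⟨g, (DirectSum.decompose 𝒜 x g).2⟩, hg⟩
      ⟨_, hJ y hyJ k, ⟨k, (DirectSum.decompose 𝒜 y k).2⟩, hk⟩ hne
    exact hzP (hsub hz)
  · rintro ⟨-, -, hWP⟩
    refine ⟨fun s hs => hs.1, fun h0 => h0.2 P.zero_mem, ?_⟩
    rintro I J hI hJ ⟨x, hxI, -, hxP⟩ ⟨y, hyJ, -, hyP⟩ hne
    have hIP : ¬ I ≤ P := fun h => hxP (h hxI)
    have hJP : ¬ J ≤ P := fun h => hyP (h hyJ)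
    have hsub : ¬ (mulClosure (I : Set R) (J : Set R) : Set R) ⊆ (P : Set R) := by
      intro hsub
      rcases hWP I J hI hJ hne hsub with h | h
      · exact hIP h
      · exact hJP h
    obtain ⟨z, hz, hzP⟩ := Set.not_subset.mp hsub
    obtain ⟨g, hg⟩ := exists_decompose_not_mem 𝒜 P z hzP
    exact ⟨_, mulClosure_graded 𝒜 hmul I J hI hJ z hz g,
      ⟨g, (DirectSum.decompose 𝒜 z g).2⟩, hg⟩
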